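/- arXiv:2006.04717 — 2 statements merged into one kernel-verified Lean document; each statement's English description precedes it below -/
import Mathlib

section
/- Let A and B be groups, let i : C → A and j : C → B be injective homomorphisms with j(C) of index 2 in B, and let G = A *_C B be the corresponding amalgamated free product. Fix g ∈ B ∖ j(C) and let β : C → C be the automorphism with j(β(h)) = g⁻¹ j(h) g for all h ∈ C. Let φ : G → B/j(C) ≅ ℤ/2ℤ be the homomorphism that is trivial on A and is the quotient map on B. Then the kernel of φ is a subgroup of index 2 in G isomorphic to the twisted double D(A, C, β). -/
/-- A family of two groups indexed by `Bool`. -/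
def twoFam (A B : Type) : Bool → Type := fun b => bif b then A else B

instance twoFamGroup {A B : Type} [Group A] [Group B] : ∀ b, Group (twoFam A B b) :=
  fun b => match b with
  | false => (inferInstance : Group B)
  | true => (inferInstance : Group A)

/-- The pair of maps from `C` into the two-element family of groups, packaging
homomorphisms `i : C →* A` and `j : C →* B`. -/
def twoMaps {A B C : Type} [Group A] [Group B] [Group C] (i : C →* A) (j : C →* B) :
    ∀ b, C →* twoFam A B b := fun b => match b with
  | false => j
  | true => i

/-- The amalgamated free product `A *_C B` (pushout) along `i : C →* A` and `j : C →* B`. -/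
abbrev AmalgamatedProduct {A B C : Type} [Group A] [Group B] [Group C]
    (i : C →* A) (j : C →* B) : Type :=
  Monoid.PushoutI (twoMaps i j)



open Monoid PushoutI

variable {A B C : Type} [Group A] [Group B] [Group C]

/-- package two homs `A →* K`, `B →* K` into a map on the family. -/
def fmk {K : Type*} [Group K] (f : A →* K) (f' : B →* K) : ∀ b, twoFam A B b →* K :=
  fun b => match b with
  | false => f'
  | true => f

lemma of_true_eq_base (i : C →* A) (j : C →* B) (c : C) :
    of (φ := twoMaps i j) true (i c) = base (twoMaps i j) c :=
  of_apply_eq_base (twoMaps i j) true c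

lemma of_false_eq_base (i : C →* A) (j : C →* B) (c : C) :
    of (φ := twoMaps i j) false (j c) = base (twoMaps i j) c :=
  of_apply_eq_base (twoMaps i j) false c

lemma ofF_mul (i : C →* A) (j : C →* B) (x y : B) :
    of (φ := twoMaps i j) false (x * y) = of (φ := twoMaps i j) false x * of (φ := twoMaps i j) false y :=
  map_mul _ x y

lemma ofT_mul (i : C →* A) (j : C →* B) (x y : A) :
    of (φ := twoMaps i j) true (x * y) = of (φ := twoMaps i j) true x * of (φ := twoMaps i j) true y :=
  map_mul _ x y

lemma ofF_inv (i : C →* A) (j : C →* B) (x : B) :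
    of (φ := twoMaps i j) false (x⁻¹ : B) = (of (φ := twoMaps i j) false x)⁻¹ :=
  map_inv _ x

lemma ofT_inv (i : C →* A) (j : C →* B) (x : A) :
    of (φ := twoMaps i j) true (x⁻¹ : A) = (of (φ := twoMaps i j) true x)⁻¹ :=
  map_inv _ x

/-- conjugation by `x` as a hom -/
def cjh (x : A) : A →* A where
  toFun a := x * a * x⁻¹
  map_one' := by simp
  map_mul' a b := by simp only [mul_assoc, mul_one, inv_mul_cancel_left]

@[simp] lemma cjh_apply (x a : A) : cjh x a = x * a * x⁻¹ := rfl

section Sigma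

variable (i : C →* A) (β : C ≃* C) (c₀ : C)

local notation "φD" => twoMaps i (MonoidHom.comp i β.toMonoidHom)
local notation "D" => Monoid.PushoutI (twoMaps i (MonoidHom.comp i β.toMonoidHom))

def sigF (hK : ∀ c, c₀ * β c * c₀⁻¹ = β.symm c) : D →* D :=
  PushoutI.lift
    (fmk (of (φ := φD) false) ((of (φ := φD) true).comp (cjh (i c₀))))
    ((of (φ := φD) false).comp i)
    (by
      intro b
      cases b with
      | true => rfl
      | false =>
        ext c
        show of (φ := φD) true (i c₀ * i (β c) * (i c₀)⁻¹) = of (φ := φD) false (i c)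
        rw [← map_inv, ← map_mul, ← map_mul, of_true_eq_base i (i.comp β.toMonoidHom), hK]
        have h2 : of (φ := φD) false (i (β (β.symm c))) = base φD (β.symm c) :=
          of_false_eq_base i (i.comp β.toMonoidHom) (β.symm c)
        rw [MulEquiv.apply_symm_apply] at h2
        rw [← h2])

@[simp] lemma sigF_of_true (hK : ∀ c, c₀ * β c * c₀⁻¹ = β.symm c) (a : A) :
    sigF i β c₀ hK (of (φ := φD) true a) = of (φ := φD) false a :=
  lift_of _ _ _ _

@[simp] lemma sigF_of_false (hK : ∀ c, c₀ * β c * c₀⁻¹ = β.symm c) (a : A) :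
    sigF i β c₀ hK (of (φ := φD) false a) = of (φ := φD) true (i c₀ * a * (i c₀)⁻¹) :=
  lift_of _ _ _ _

def sigInv (hfix : β c₀ = c₀) (hK' : ∀ c, c₀⁻¹ * β.symm c * c₀ = β c) : D →* D :=
  PushoutI.lift
    (fmk ((of (φ := φD) false).comp (cjh (i c₀)⁻¹)) (of (φ := φD) true))
    ((of (φ := φD) false).comp ((cjh (i c₀)⁻¹).comp i))
    (by
      intro b
      cases b with
      | true => rfl
      | false =>
        ext c
        show of (φ := φD) true (i (β c))
            = of (φ := φD) false ((i c₀)⁻¹ * i c * ((i c₀)⁻¹)⁻¹)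
        rw [of_true_eq_base i (i.comp β.toMonoidHom) (β c), inv_inv, ← map_inv, ← map_mul,
          ← map_mul, ← hK' c]
        have h2 : of (φ := φD) false (i (β (c₀⁻¹ * β.symm c * c₀)))
            = base φD (c₀⁻¹ * β.symm c * c₀) :=
          of_false_eq_base i (i.comp β.toMonoidHom) _
        rw [← h2, hK' c, ← hK' c]
        congr 1
        simp [mul_assoc, hfix]
        rfl)

@[simp] lemma sigInv_of_true (hfix : β c₀ = c₀) (hK' : ∀ c, c₀⁻¹ * β.symm c * c₀ = β c)
    (a : A) :
    sigInv i β c₀ hfix hK' (of (φ := φD) true a)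
      = of (φ := φD) false ((i c₀)⁻¹ * a * i c₀) := by
  unfold sigInv
  refine (lift_of _ _ _ _).trans ?_
  show of (φ := φD) false (cjh (i c₀)⁻¹ a) = _
  rw [cjh_apply, inv_inv]

@[simp] lemma sigInv_of_false (hfix : β c₀ = c₀) (hK' : ∀ c, c₀⁻¹ * β.symm c * c₀ = β c)
    (a : A) :
    sigInv i β c₀ hfix hK' (of (φ := φD) false a) = of (φ := φD) true a :=
  lift_of _ _ _ _

end Sigma

section Psi

variable (i : C →* A) (j : C →* B) (β : C ≃* C) (c₀ : C) (g : B)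

local notation "φG" => twoMaps i j
local notation "φD" => twoMaps i (MonoidHom.comp i β.toMonoidHom)

lemma baseD_eq_of_false (c : C) :
    base φD c = of (φ := φD) false (i (β c)) :=
  (of_false_eq_base i (i.comp β.toMonoidHom) c).symm

lemma baseD_eq_of_true (c : C) :
    base φD c = of (φ := φD) true (i c) :=
  (of_true_eq_base i (i.comp β.toMonoidHom) c).symm

lemma sigF_base (hK : ∀ c, c₀ * β c * c₀⁻¹ = β.symm c) (c : C) :
    sigF i β c₀ hK (base φD c) = base φD (β.symm c) := by
  rw [baseD_eq_of_true, sigF_of_true, baseD_eq_of_false, MulEquiv.apply_symm_apply]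

lemma sigInv_base (hfix : β c₀ = c₀) (hK' : ∀ c, c₀⁻¹ * β.symm c * c₀ = β c) (c : C) :
    sigInv i β c₀ hfix hK' (base φD c) = base φD (β c) := by
  rw [baseD_eq_of_false, sigInv_of_false, baseD_eq_of_true]

lemma sig_inv_sig (hK : ∀ c, c₀ * β c * c₀⁻¹ = β.symm c) (hfix : β c₀ = c₀)
    (hK' : ∀ c, c₀⁻¹ * β.symm c * c₀ = β c) (d : PushoutI φD) :
    sigInv i β c₀ hfix hK' (sigF i β c₀ hK d) = d := by
  have key : (sigInv i β c₀ hfix hK').comp (sigF i β c₀ hK) = MonoidHom.id _ := by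
    apply hom_ext_nonempty
    intro b
    cases b with
    | true =>
      refine MonoidHom.ext fun (a : A) => ?_
      show sigInv i β c₀ hfix hK' (sigF i β c₀ hK (of (φ := φD) true a))
        = of (φ := φD) true a
      rw [sigF_of_true, sigInv_of_false]
    | false =>
      refine MonoidHom.ext fun (a : A) => ?_
      show sigInv i β c₀ hfix hK' (sigF i β c₀ hK (of (φ := φD) false a))
        = of (φ := φD) false a
      rw [sigF_of_false, sigInv_of_true]
      simp [mul_assoc]
  exact DFunLike.congr_fun key d

lemma sig_sig_inv (hK : ∀ c, c₀ * β c * c₀⁻¹ = β.symm c) (hfix : β c₀ = c₀)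
    (hK' : ∀ c, c₀⁻¹ * β.symm c * c₀ = β c) (d : PushoutI φD) :
    sigF i β c₀ hK (sigInv i β c₀ hfix hK' d) = d := by
  have key : (sigF i β c₀ hK).comp (sigInv i β c₀ hfix hK') = MonoidHom.id _ := by
    apply hom_ext_nonempty
    intro b
    cases b with
    | true =>
      refine MonoidHom.ext fun (a : A) => ?_
      show sigF i β c₀ hK (sigInv i β c₀ hfix hK' (of (φ := φD) true a))
        = of (φ := φD) true a
      rw [sigInv_of_true, sigF_of_false]
      simp [mul_assoc]
    | false =>
      refine MonoidHom.ext fun (a : A) => ?_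
      show sigF i β c₀ hK (sigInv i β c₀ hfix hK' (of (φ := φD) false a))
        = of (φ := φD) false a
      rw [sigInv_of_false, sigF_of_true]
  exact DFunLike.congr_fun key d

def psi (hβ : ∀ h : C, j (β h) = g⁻¹ * j h * g) :
    PushoutI φD →* PushoutI φG :=
  PushoutI.lift
    (fmk (of (φ := φG) true)
      ((cjh (of (φ := φG) false g)).comp (of (φ := φG) true)))
    ((of (φ := φG) true).comp i)
    (by
      intro b
      cases b with
      | true => rfl
      | false =>
        ext c
        show of (φ := φG) false g * of (φ := φG) true (i (β c)) *
            (of (φ := φG) false g)⁻¹ = of (φ := φG) true (i c)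
        rw [of_true_eq_base i j (β c), ← of_false_eq_base i j (β c), hβ c,
          of_true_eq_base i j c, ← of_false_eq_base i j c]
        simp [mul_assoc, ofF_mul, ofF_inv])

@[simp] lemma psi_of_true (hβ : ∀ h : C, j (β h) = g⁻¹ * j h * g) (a : A) :
    psi i j β g hβ (of (φ := φD) true a) = of (φ := φG) true a :=
  lift_of _ _ _ _

@[simp] lemma psi_of_false (hβ : ∀ h : C, j (β h) = g⁻¹ * j h * g) (a : A) :
    psi i j β g hβ (of (φ := φD) false a)
      = of (φ := φG) false g * of (φ := φG) true a * (of (φ := φG) false g)⁻¹ := by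
  unfold psi
  exact lift_of _ _ _ _

lemma psi_base (hβ : ∀ h : C, j (β h) = g⁻¹ * j h * g) (c : C) :
    psi i j β g hβ (base φD c) = base φG c := by
  unfold psi
  rw [lift_base]
  exact of_true_eq_base i j c

lemma psi_conj (hβ : ∀ h : C, j (β h) = g⁻¹ * j h * g) (hc₀ : j c₀ = g * g)
    (hK : ∀ c, c₀ * β c * c₀⁻¹ = β.symm c) (x : PushoutI φD) :
    of (φ := φG) false g * psi i j β g hβ x * (of (φ := φG) false g)⁻¹
      = psi i j β g hβ (sigF i β c₀ hK x) := by
  have key : ((cjh (of (φ := φG) false g)).comp (psi i j β g hβ))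
      = (psi i j β g hβ).comp (sigF i β c₀ hK) := by
    apply hom_ext_nonempty
    intro b
    cases b with
    | true =>
      refine MonoidHom.ext fun (a : A) => ?_
      show of (φ := φG) false g * psi i j β g hβ (of (φ := φD) true a) *
          (of (φ := φG) false g)⁻¹ = psi i j β g hβ (sigF i β c₀ hK (of (φ := φD) true a))
      rw [sigF_of_true, psi_of_true, psi_of_false]
    | false =>
      refine MonoidHom.ext fun (a : A) => ?_
      show of (φ := φG) false g * psi i j β g hβ (of (φ := φD) false a) *
          (of (φ := φG) false g)⁻¹ = psi i j β g hβ (sigF i β c₀ hK (of (φ := φD) false a))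
      have hg2 : of (φ := φG) true (i c₀) = of (φ := φG) false g * of (φ := φG) false g := by
        rw [of_true_eq_base i j c₀, ← of_false_eq_base i j c₀, hc₀, ofF_mul]
      rw [sigF_of_false, psi_of_false, psi_of_true, ofT_mul, ofT_mul, ofT_inv, hg2]
      group
  exact DFunLike.congr_fun key x

end Psi

/-- Left multiplication permutation action on `M × Bool`. -/
def lperm {M : Type} [Group M] : M →* Equiv.Perm (M × Bool) where
  toFun x := ⟨fun p => (x * p.1, p.2), fun p => (x⁻¹ * p.1, p.2),
    fun p => by simp, fun p => by simp⟩
  map_one' := by ext p <;> simp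
  map_mul' x y := by ext p <;> simp [mul_assoc]

@[simp] lemma lperm_apply {M : Type} [Group M] (x : M) (p : M × Bool) :
    lperm x p = (x * p.1, p.2) := rfl

section BAction

variable (i : C →* A) (j : C →* B) (β : C ≃* C) (c₀ : C) (g : B)

local notation "φG" => twoMaps i j
local notation "φD" => twoMaps i (MonoidHom.comp i β.toMonoidHom)
local notation "X" => (PushoutI (twoMaps i (MonoidHom.comp i β.toMonoidHom)) × Bool)

variable (hco : ∀ b : B, b ∉ j.range → b * g⁻¹ ∈ j.range)
  (hK : ∀ c, c₀ * β c * c₀⁻¹ = β.symm c) (hfix : β c₀ = c₀)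
  (hK' : ∀ c, c₀⁻¹ * β.symm c * c₀ = β c)

open scoped Classical in
/-- The action of an element of `B` on `D × Bool`. -/
noncomputable def FB : B → X → X :=
  fun b p =>
    if h : b ∈ j.range then (base φD h.choose * p.1, p.2)
    else
      match p with
      | (d, false) => (base φD (hco b h).choose * sigF i β c₀ hK d, true)
      | (d, true) => (base φD ((hco b h).choose * c₀) * sigInv i β c₀ hfix hK' d, false)

lemma FB_j (hj : Function.Injective j) (c : C) (p : X) :
    FB i j β c₀ g hco hK hfix hK' (j c) p = (base φD c * p.1, p.2) := by
  have h : j c ∈ j.range := ⟨c, rfl⟩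
  have e : h.choose = c := hj h.choose_spec
  unfold FB
  rw [dif_pos h, e]

lemma FB_notin (hj : Function.Injective j) {b : B} (hb : b ∉ j.range) {c : C} (hcb : j c = b * g⁻¹) :
    (∀ d : PushoutI φD, FB i j β c₀ g hco hK hfix hK' b (d, false)
        = (base φD c * sigF i β c₀ hK d, true)) ∧
    (∀ d : PushoutI φD, FB i j β c₀ g hco hK hfix hK' b (d, true)
        = (base φD (c * c₀) * sigInv i β c₀ hfix hK' d, false)) := by
  have e : (hco b hb).choose = c := hj (by rw [(hco b hb).choose_spec, hcb])
  constructor <;> intro d <;> unfold FB <;> rw [dif_neg hb, e]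

lemma jg_notin (hg : g ∉ j.range) (c : C) : j c * g ∉ j.range := by
  rintro ⟨y, hy⟩
  exact hg ⟨c⁻¹ * y, by rw [map_mul, hy, map_inv]; group⟩

lemma FB_jg (hj : Function.Injective j) (hg : g ∉ j.range) (c : C) :
    (∀ d : PushoutI φD, FB i j β c₀ g hco hK hfix hK' (j c * g) (d, false)
        = (base φD c * sigF i β c₀ hK d, true)) ∧
    (∀ d : PushoutI φD, FB i j β c₀ g hco hK hfix hK' (j c * g) (d, true)
        = (base φD (c * c₀) * sigInv i β c₀ hfix hK' d, false)) :=
  FB_notin i j β c₀ g hco hK hfix hK' hj (jg_notin j g hg c) (by group)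

lemma FB_mul (hj : Function.Injective j) (hg : g ∉ j.range)
    (hgj : ∀ h : C, g * j h = j (β.symm h) * g) (hc₀ : j c₀ = g * g) (b b' : B) (p : X) :
    FB i j β c₀ g hco hK hfix hK' (b * b') p
      = FB i j β c₀ g hco hK hfix hK' b (FB i j β c₀ g hco hK hfix hK' b' p) := by
  have hcomm : ∀ c : C, β.symm c * c₀ = c₀ * β c := fun c => by rw [← hK' c]; group
  have hfix' : β.symm c₀ = c₀ := by
    conv_lhs => rw [← hfix]
    exact β.symm_apply_apply c₀
  have hcomm3 : ∀ (c : C) (x : PushoutI (twoMaps i (MonoidHom.comp i β.toMonoidHom))),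
      base (twoMaps i (MonoidHom.comp i β.toMonoidHom)) (β.symm c) *
        (base (twoMaps i (MonoidHom.comp i β.toMonoidHom)) c₀ * x)
      = base (twoMaps i (MonoidHom.comp i β.toMonoidHom)) c₀ *
        (base (twoMaps i (MonoidHom.comp i β.toMonoidHom)) (β c) * x) := by
    intro c x
    rw [← mul_assoc, ← map_mul, hcomm c, map_mul, mul_assoc]
  obtain ⟨d, ε⟩ := p
  by_cases hb : b ∈ j.range <;> by_cases hb' : b' ∈ j.range
  · obtain ⟨c, rfl⟩ := hb
    obtain ⟨c', rfl⟩ := hb'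
    rw [← map_mul, FB_j i j β c₀ g hco hK hfix hK' hj,
      FB_j i j β c₀ g hco hK hfix hK' hj, FB_j i j β c₀ g hco hK hfix hK' hj]
    simp [-MulEquiv.toMonoidHom_eq_coe, map_mul, mul_assoc]
  · obtain ⟨c, rfl⟩ := hb
    obtain ⟨c', hc'⟩ := hco b' hb'
    have hb'e : b' = j c' * g := by rw [hc']; group
    subst hb'e
    have hprod : j c * (j c' * g) = j (c * c') * g := by rw [map_mul, mul_assoc]
    rw [hprod]
    cases ε
    · rw [(FB_jg i j β c₀ g hco hK hfix hK' hj hg (c * c')).1,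
        (FB_jg i j β c₀ g hco hK hfix hK' hj hg c').1,
        FB_j i j β c₀ g hco hK hfix hK' hj]
      simp [-MulEquiv.toMonoidHom_eq_coe, map_mul, mul_assoc]
    · rw [(FB_jg i j β c₀ g hco hK hfix hK' hj hg (c * c')).2,
        (FB_jg i j β c₀ g hco hK hfix hK' hj hg c').2,
        FB_j i j β c₀ g hco hK hfix hK' hj]
      simp [-MulEquiv.toMonoidHom_eq_coe, map_mul, mul_assoc]
  · obtain ⟨c, hc⟩ := hco b hb
    have hbe : b = j c * g := by rw [hc]; group
    subst hbe
    obtain ⟨c', rfl⟩ := hb'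
    have hprod : (j c * g) * j c' = j (c * β.symm c') * g := by
      rw [mul_assoc, hgj c', map_mul, mul_assoc]
    rw [hprod]
    cases ε
    · rw [FB_j i j β c₀ g hco hK hfix hK' hj,
        (FB_jg i j β c₀ g hco hK hfix hK' hj hg (c * β.symm c')).1,
        (FB_jg i j β c₀ g hco hK hfix hK' hj hg c).1]
      simp [-MulEquiv.toMonoidHom_eq_coe, map_mul, mul_assoc, sigF_base]
    · rw [FB_j i j β c₀ g hco hK hfix hK' hj,
        (FB_jg i j β c₀ g hco hK hfix hK' hj hg (c * β.symm c')).2,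
        (FB_jg i j β c₀ g hco hK hfix hK' hj hg c).2]
      simp [-MulEquiv.toMonoidHom_eq_coe, map_mul, mul_assoc, sigInv_base, hcomm3]
  · obtain ⟨c, hc⟩ := hco b hb
    have hbe : b = j c * g := by rw [hc]; group
    subst hbe
    obtain ⟨c', hc'⟩ := hco b' hb'
    have hb'e : b' = j c' * g := by rw [hc']; group
    subst hb'e
    have hprod : (j c * g) * (j c' * g) = j (c * β.symm c' * c₀) := by
      rw [map_mul, map_mul, hc₀, ← mul_assoc, mul_assoc (j c), hgj c']
      group
    rw [hprod]
    cases ε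
    · rw [FB_j i j β c₀ g hco hK hfix hK' hj,
        (FB_jg i j β c₀ g hco hK hfix hK' hj hg c').1,
        (FB_jg i j β c₀ g hco hK hfix hK' hj hg c).2]
      simp [-MulEquiv.toMonoidHom_eq_coe, map_mul, mul_assoc, sigInv_base, sig_inv_sig, hcomm3]
    · rw [FB_j i j β c₀ g hco hK hfix hK' hj,
        (FB_jg i j β c₀ g hco hK hfix hK' hj hg c').2,
        (FB_jg i j β c₀ g hco hK hfix hK' hj hg c).1]
      simp [-MulEquiv.toMonoidHom_eq_coe, map_mul, mul_assoc, sigF_base, sig_sig_inv, hfix']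

lemma FB_one (hj : Function.Injective j) (p : X) : FB i j β c₀ g hco hK hfix hK' 1 p = p := by
  have := FB_j i j β c₀ g hco hK hfix hK' hj 1 p
  rw [map_one] at this
  rw [this, map_one, one_mul]

end BAction

section Theta

variable (i : C →* A) (j : C →* B) (β : C ≃* C) (c₀ : C) (g : B)

local notation "φG" => twoMaps i j
local notation "φD" => twoMaps i (MonoidHom.comp i β.toMonoidHom)
local notation "X" => (PushoutI (twoMaps i (MonoidHom.comp i β.toMonoidHom)) × Bool)

variable (hco : ∀ b : B, b ∉ j.range → b * g⁻¹ ∈ j.range)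
  (hK : ∀ c, c₀ * β c * c₀⁻¹ = β.symm c) (hfix : β c₀ = c₀)
  (hK' : ∀ c, c₀⁻¹ * β.symm c * c₀ = β c)
  (hj : Function.Injective j) (hg : g ∉ j.range)
  (hgj : ∀ h : C, g * j h = j (β.symm h) * g) (hc₀ : j c₀ = g * g)

noncomputable def PiB : B →* Equiv.Perm X where
  toFun b :=
    { toFun := FB i j β c₀ g hco hK hfix hK' b
      invFun := FB i j β c₀ g hco hK hfix hK' b⁻¹
      left_inv := fun p => by
        rw [← FB_mul i j β c₀ g hco hK hfix hK' hj hg hgj hc₀, inv_mul_cancel,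
          FB_one i j β c₀ g hco hK hfix hK' hj]
      right_inv := fun p => by
        rw [← FB_mul i j β c₀ g hco hK hfix hK' hj hg hgj hc₀, mul_inv_cancel,
          FB_one i j β c₀ g hco hK hfix hK' hj] }
  map_one' := Equiv.ext fun p => FB_one i j β c₀ g hco hK hfix hK' hj p
  map_mul' b b' := Equiv.ext fun p => FB_mul i j β c₀ g hco hK hfix hK' hj hg hgj hc₀ b b' p

@[simp] lemma PiB_apply (b : B) (p : X) :
    PiB i j β c₀ g hco hK hfix hK' hj hg hgj hc₀ b p = FB i j β c₀ g hco hK hfix hK' b p := rfl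

@[simp] lemma PiB_inv_apply (b : B) (p : X) :
    (PiB i j β c₀ g hco hK hfix hK' hj hg hgj hc₀ b)⁻¹ p
      = FB i j β c₀ g hco hK hfix hK' b⁻¹ p := rfl

noncomputable def Theta : PushoutI φG →* Equiv.Perm X :=
  PushoutI.lift
    (fmk (lperm.comp (of (φ := φD) true)) (PiB i j β c₀ g hco hK hfix hK' hj hg hgj hc₀))
    ((lperm.comp (of (φ := φD) true)).comp i)
    (by
      intro b
      cases b with
      | true => rfl
      | false =>
        refine MonoidHom.ext fun c => Equiv.ext fun p => ?_
        show FB i j β c₀ g hco hK hfix hK' (j c) p = lperm (of (φ := φD) true (i c)) p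
        rw [FB_j i j β c₀ g hco hK hfix hK' hj c p, lperm_apply, ← baseD_eq_of_true])

@[simp] lemma Theta_of_true (a : A) :
    Theta i j β c₀ g hco hK hfix hK' hj hg hgj hc₀ (of (φ := φG) true a)
      = lperm (of (φ := φD) true a) := by
  unfold Theta
  exact lift_of _ _ _ _

@[simp] lemma Theta_of_false (b : B) :
    Theta i j β c₀ g hco hK hfix hK' hj hg hgj hc₀ (of (φ := φG) false b)
      = PiB i j β c₀ g hco hK hfix hK' hj hg hgj hc₀ b := by
  unfold Theta
  exact lift_of _ _ _ _

lemma Theta_psi (hβ : ∀ h : C, j (β h) = g⁻¹ * j h * g) (x : PushoutI φD) :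
    Theta i j β c₀ g hco hK hfix hK' hj hg hgj hc₀ (psi i j β g hβ x) = lperm x := by
  have e1 : ∀ d, FB i j β c₀ g hco hK hfix hK' g (d, false) = (sigF i β c₀ hK d, true) := by
    intro d
    have h := (FB_jg i j β c₀ g hco hK hfix hK' hj hg 1).1 d
    simpa [-MulEquiv.toMonoidHom_eq_coe] using h
  have e2 : ∀ d, FB i j β c₀ g hco hK hfix hK' g (d, true)
      = (base φD c₀ * sigInv i β c₀ hfix hK' d, false) := by
    intro d
    have h := (FB_jg i j β c₀ g hco hK hfix hK' hj hg 1).2 d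
    simpa [-MulEquiv.toMonoidHom_eq_coe] using h
  have hginv : g⁻¹ ∉ j.range := fun ⟨c, hc⟩ => hg ⟨c⁻¹, by rw [map_inv, hc, inv_inv]⟩
  have hrep : j c₀⁻¹ = g⁻¹ * g⁻¹ := by rw [map_inv, hc₀]; group
  have e3 : ∀ d, FB i j β c₀ g hco hK hfix hK' g⁻¹ (d, false)
      = (base φD c₀⁻¹ * sigF i β c₀ hK d, true) :=
    (FB_notin i j β c₀ g hco hK hfix hK' hj hginv (by rw [hrep])).1
  have e4 : ∀ d, FB i j β c₀ g hco hK hfix hK' g⁻¹ (d, true) = (sigInv i β c₀ hfix hK' d, false) := by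
    intro d
    have h := (FB_notin i j β c₀ g hco hK hfix hK' hj hginv (by rw [hrep])).2 d
    simpa [-MulEquiv.toMonoidHom_eq_coe] using h
  have key : (Theta i j β c₀ g hco hK hfix hK' hj hg hgj hc₀).comp (psi i j β g hβ)
      = lperm := by
    apply hom_ext_nonempty
    intro b
    cases b with
    | true =>
      refine MonoidHom.ext fun (a : A) => ?_
      show Theta i j β c₀ g hco hK hfix hK' hj hg hgj hc₀ (psi i j β g hβ (of (φ := φD) true a))
        = lperm (of (φ := φD) true a)
      rw [psi_of_true, Theta_of_true]
    | false =>
      refine MonoidHom.ext fun (a : A) => ?_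
      show Theta i j β c₀ g hco hK hfix hK' hj hg hgj hc₀ (psi i j β g hβ (of (φ := φD) false a))
        = lperm (of (φ := φD) false a)
      rw [psi_of_false, map_mul, map_mul, map_inv, Theta_of_false, Theta_of_true]
      have b1 : base φD c₀ = of (φ := φD) false (i c₀) := by
        rw [baseD_eq_of_false, hfix]
      have b2 : base φD c₀⁻¹ = of (φ := φD) false (i c₀⁻¹) := by
        rw [baseD_eq_of_false, map_inv, hfix]
      refine Equiv.ext fun p => ?_
      obtain ⟨d, ε⟩ := p
      cases ε
      · rw [Equiv.Perm.mul_apply, Equiv.Perm.mul_apply, PiB_inv_apply, e3, lperm_apply,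
          PiB_apply]
        show FB i j β c₀ g hco hK hfix hK' g
            (of (φ := φD) true a * (base φD c₀⁻¹ * sigF i β c₀ hK d), true) = _
        rw [e2, map_mul, map_mul, sigInv_of_true, sigInv_base, sig_inv_sig, map_inv, hfix,
          ← map_inv, b1, b2, lperm_apply]
        simp [-MulEquiv.toMonoidHom_eq_coe, map_mul, map_inv, mul_assoc, ofF_mul, ofF_inv]
      · rw [Equiv.Perm.mul_apply, Equiv.Perm.mul_apply, PiB_inv_apply, e4, lperm_apply,
          PiB_apply]
        show FB i j β c₀ g hco hK hfix hK' g
            (of (φ := φD) true a * sigInv i β c₀ hfix hK' d, false) = _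
        rw [e1, map_mul, sigF_of_true, sig_sig_inv, lperm_apply]
  exact DFunLike.congr_fun key x

lemma psi_injective (hβ : ∀ h : C, j (β h) = g⁻¹ * j h * g)
    (hco' : ∀ b : B, b ∉ j.range → b * g⁻¹ ∈ j.range)
    (hK2 : ∀ c, c₀ * β c * c₀⁻¹ = β.symm c) (hfix2 : β c₀ = c₀)
    (hK2' : ∀ c, c₀⁻¹ * β.symm c * c₀ = β c)
    (hj2 : Function.Injective j) (hg2 : g ∉ j.range)
    (hgj2 : ∀ h : C, g * j h = j (β.symm h) * g) (hc₀2 : j c₀ = g * g) :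
    Function.Injective (psi i j β g hβ) := by
  intro x y hxy
  have h1 := Theta_psi i j β c₀ g hco' hK2 hfix2 hK2' hj2 hg2 hgj2 hc₀2 hβ x
  have h2 := Theta_psi i j β c₀ g hco' hK2 hfix2 hK2' hj2 hg2 hgj2 hc₀2 hβ y
  have h3 : lperm x = lperm y := by rw [← h1, ← h2, hxy]
  have h4 := congrArg (fun e : Equiv.Perm X => (e ((1 : PushoutI φD), false)).1) h3
  have h5 : x * 1 = y * 1 := h4
  exact (mul_one x).symm.trans (h5.trans (mul_one y))

end Theta

theorem amalgam_index_two_kernel_is_twisted_double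
    (A B C : Type) [Group A] [Group B] [Group C]
    (i : C →* A) (j : C →* B) (hi : Function.Injective i) (hj : Function.Injective j)
    (hidx : j.range.index = 2) (g : B) (hg : g ∉ j.range)
    (β : C ≃* C) (hβ : ∀ h : C, j (β h) = g⁻¹ * j h * g)
    (Φ : AmalgamatedProduct i j →* Multiplicative (ZMod 2))
    (hΦA : ∀ a : A, Φ (Monoid.PushoutI.of (φ := twoMaps i j) true a) = 1)
    (hΦB : ∀ b : B, Φ (Monoid.PushoutI.of (φ := twoMaps i j) false b) = 1 ↔ b ∈ j.range) :
    Φ.ker.index = 2 ∧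
    Nonempty (Φ.ker ≃* AmalgamatedProduct i (i.comp β.toMonoidHom)) := by
  -- Derived basic facts
  have hco : ∀ b : B, b ∉ j.range → b * g⁻¹ ∈ j.range := fun b hb => by
    rw [Subgroup.mul_mem_iff_of_index_two hidx]
    exact iff_of_false hb (fun h => hg ((Subgroup.inv_mem_iff _).1 h))
  have hgg : g * g ∈ j.range := by
    rw [Subgroup.mul_mem_iff_of_index_two hidx]
  obtain ⟨c₀, hc₀⟩ := hgg
  have hβinv : ∀ c, j (β.symm c) = g * j c * g⁻¹ := by
    intro c
    have h1 := hβ (β.symm c)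
    rw [MulEquiv.apply_symm_apply] at h1
    rw [h1]; group
  have hgj : ∀ h : C, g * j h = j (β.symm h) * g := fun h => by rw [hβinv]; group
  have hfix : β c₀ = c₀ := hj (by rw [hβ, hc₀]; group)
  have hK : ∀ c, c₀ * β c * c₀⁻¹ = β.symm c := fun c =>
    hj (by rw [map_mul, map_mul, map_inv, hc₀, hβ, hβinv]; group)
  have hK' : ∀ c, c₀⁻¹ * β.symm c * c₀ = β c := fun c =>
    hj (by rw [map_mul, map_mul, map_inv, hc₀, hβinv, hβ]; group)
  have hΦg : Φ (Monoid.PushoutI.of (φ := twoMaps i j) false g) ≠ 1 :=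
    fun h => hg ((hΦB g).1 h)
  constructor
  · -- index = 2
    have hsurj : Function.Surjective Φ := by
      intro x
      by_cases hx : x = 1
      · exact ⟨1, by simp [hx]⟩
      · refine ⟨Monoid.PushoutI.of (φ := twoMaps i j) false g, ?_⟩
        have htwo : ∀ u v : Multiplicative (ZMod 2), u ≠ 1 → v ≠ 1 → u = v := by decide
        exact htwo _ _ hΦg hx
    rw [Subgroup.index_ker, Φ.range_eq_top_of_surjective hsurj, Subgroup.card_top]
    simp only [Nat.card_eq_fintype_card, Fintype.card_multiplicative, ZMod.card]
  · -- the kernel is the twisted double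
    set ψ := psi i j β g hβ with hψdef
    have hker1 : ∀ x, Φ (ψ x) = 1 := by
      have hcomp : Φ.comp ψ = 1 := by
        apply hom_ext_nonempty
        intro b
        cases b with
        | true =>
          refine MonoidHom.ext fun (a : A) => ?_
          show Φ (ψ (of (φ := twoMaps i (MonoidHom.comp i β.toMonoidHom)) true a)) = 1
          rw [hψdef, psi_of_true]
          exact hΦA a
        | false =>
          refine MonoidHom.ext fun (a : A) => ?_
          show Φ (ψ (of (φ := twoMaps i (MonoidHom.comp i β.toMonoidHom)) false a)) = 1
          rw [hψdef, psi_of_false, map_mul, map_mul, map_inv, hΦA a]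
          group
      intro x
      have := DFunLike.congr_fun hcomp x
      exact this
    have hle1 : ψ.range ≤ Φ.ker := by
      rintro _ ⟨w, rfl⟩
      exact MonoidHom.mem_ker.2 (hker1 w)
    -- surjectivity of ψ onto the kernel
    have hconjK : ∀ z ∈ ψ.range,
        of (φ := twoMaps i j) false g * z * (of (φ := twoMaps i j) false g)⁻¹ ∈ ψ.range := by
      rintro _ ⟨w, rfl⟩
      exact ⟨sigF i β c₀ hK w, (psi_conj i j β c₀ g hβ hc₀ hK w).symm⟩
    have hg2K : of (φ := twoMaps i j) false g * of (φ := twoMaps i j) false g ∈ ψ.range := by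
      refine ⟨base (twoMaps i (MonoidHom.comp i β.toMonoidHom)) c₀, ?_⟩
      rw [hψdef, psi_base, ← of_false_eq_base i j c₀, hc₀, ofF_mul]
    have main : ∀ x : Monoid.PushoutI (twoMaps i j), x ∈ ψ.range ∨
        ∃ y ∈ ψ.range, x = y * of (φ := twoMaps i j) false g := by
      intro x
      refine Monoid.PushoutI.induction_on
        (motive := fun x => x ∈ ψ.range ∨ ∃ y ∈ ψ.range, x = y * of (φ := twoMaps i j) false g)
        x ?_ ?_ ?_
      · intro b gb
        cases b with
        | true =>
          exact Or.inl ⟨of (φ := twoMaps i (MonoidHom.comp i β.toMonoidHom)) true gb,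
            psi_of_true i j β g hβ gb⟩
        | false =>
          by_cases hbr : gb ∈ j.range
          · obtain ⟨c, rfl⟩ := hbr
            refine Or.inl ⟨of (φ := twoMaps i (MonoidHom.comp i β.toMonoidHom)) true (i c), ?_⟩
            rw [hψdef, psi_of_true, of_true_eq_base i j c, ← of_false_eq_base i j c]
          · obtain ⟨c, hc⟩ := hco gb hbr
            refine Or.inr ⟨of (φ := twoMaps i j) true (i c),
              ⟨of (φ := twoMaps i (MonoidHom.comp i β.toMonoidHom)) true (i c),
                psi_of_true i j β g hβ (i c)⟩, ?_⟩
            rw [of_true_eq_base i j c, ← of_false_eq_base i j c, ← ofF_mul]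
            congr 1
            rw [hc]; exact (inv_mul_cancel_right (show B from gb) g).symm
      · intro h
        exact Or.inl ⟨base (twoMaps i (MonoidHom.comp i β.toMonoidHom)) h, psi_base i j β g hβ h⟩
      · intro x y hx hy
        rcases hx with hx | ⟨x', hx', rfl⟩ <;> rcases hy with hy | ⟨y', hy', rfl⟩
        · exact Or.inl (mul_mem hx hy)
        · exact Or.inr ⟨x * y', mul_mem hx hy', by group⟩
        · refine Or.inr ⟨x' * (of (φ := twoMaps i j) false g * y *
            (of (φ := twoMaps i j) false g)⁻¹), mul_mem hx' (hconjK y hy), by group⟩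
        · refine Or.inl ?_
          have heq : x' * of (φ := twoMaps i j) false g * (y' * of (φ := twoMaps i j) false g)
              = x' * (of (φ := twoMaps i j) false g * y' *
                (of (φ := twoMaps i j) false g)⁻¹) *
                (of (φ := twoMaps i j) false g * of (φ := twoMaps i j) false g) := by group
          rw [heq]
          exact mul_mem (mul_mem hx' (hconjK y' hy')) hg2K
    have hle2 : Φ.ker ≤ ψ.range := by
      intro x hx
      rcases main x with h | ⟨y, hy, rfl⟩
      · exact h
      · exfalso
        obtain ⟨w, rfl⟩ := hy
        have h1 : Φ (ψ w * of (φ := twoMaps i j) false g) = 1 := MonoidHom.mem_ker.1 hx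
        rw [map_mul, hker1 w, one_mul] at h1
        exact hΦg h1
    -- assemble the equivalence
    have hinj : Function.Injective ψ :=
      psi_injective i j β c₀ g hβ hco hK hfix hK' hj hg hgj hc₀
    let ψ' : Monoid.PushoutI (twoMaps i (MonoidHom.comp i β.toMonoidHom)) →* Φ.ker :=
      ψ.codRestrict Φ.ker (fun x => hle1 ⟨x, rfl⟩)
    have hbij : Function.Bijective ψ' := by
      constructor
      · intro x y hxy
        exact hinj (congrArg Subtype.val hxy)
      · rintro ⟨v, hv⟩
        obtain ⟨w, hw⟩ := hle2 hv
        exact ⟨w, Subtype.ext hw⟩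
    exact ⟨(MulEquiv.ofBijective ψ' hbij).symm⟩
end

section
/- Let Γ be a finite simple graph with each edge labelled by an integer ≥ 2, equipped with a partial orientation ι defined exactly on the edges with label ≥ 3. Let Γ' be the simple graph with vertex set V(Γ) × {+,−} which, for each edge {a,b} of Γ, has the edges {a₊,b₋} and {a₋,b₊}. Let Δ be the subgraph of Γ' consisting of: the edge {a₊,b₋} for each edge e = {a,b} with label ≥ 3 and ι(e) = a, and both edges {a₊,b₋} and {a₋,b₊} for each edge {a,b} with label 2. Then Δ contains no cycle (i.e. Δ is a forest) if and only if Γ contains no misdirected cycle of even length and no cycle all of whose edges are labelled 2. -/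
/-- `c : ZMod n → V` is a cycle in `Γ`: a closed walk with no backtracking
(a combinatorial immersion of the `n`-cycle); it need not be embedded. -/
structure SimpleGraph.IsCycleMap {V : Type} (Γ : SimpleGraph V) {n : ℕ} (c : ZMod n → V) :
    Prop where
  adj : ∀ i, Γ.Adj (c i) (c (i + 1))
  no_backtrack : ∀ i, c (i + 2) ≠ c i

/-- The cycle `c : ZMod n → V` is a misdirected cycle of even length with respect to the
partial orientation `D` (where `D a b` means the edge `{a,b}` is oriented with initial
vertex `a`): the partial orientation induced on its edges extends to a full orientation
(recorded by `s i = true` iff the `i`-th edge points from `c i` to `c (i+1)`) in which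
every maximal directed subpath has length 1, i.e. the directions alternate. -/
def MisdirectedEvenCycle {V : Type} (Γ : SimpleGraph V) (D : V → V → Prop)
    (n : ℕ) (c : ZMod n → V) : Prop :=
  Even n ∧ Γ.IsCycleMap c ∧ ∃ s : ZMod n → Bool,
    (∀ i, s (i + 1) = !(s i)) ∧
    (∀ i, (D (c i) (c (i + 1)) → s i = true) ∧ (D (c (i + 1)) (c i) → s i = false))

/-- The subgraph `Δ` of the bipartite double cover `Γ'` of `Γ` (on vertex set `V × Bool`,
with `a₊ = (a, true)` and `a₋ = (a, false)`): it contains the edge `{a₊, b₋}` whenever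
`D a b` holds (the edge `{a,b}` has label ≥ 3 and initial vertex `a`) or `M a b = 2`,
for each edge `{a,b}` of `Γ`. -/
def collapsedGraph {V : Type} (Γ : SimpleGraph V) (M : V → V → ℕ) (D : V → V → Prop)
    (hsymm : ∀ a b, M a b = M b a) : SimpleGraph (V × Bool) where
  Adj x y := Γ.Adj x.1 y.1 ∧
    ((x.2 = true ∧ y.2 = false ∧ (D x.1 y.1 ∨ M x.1 y.1 = 2)) ∨
     (x.2 = false ∧ y.2 = true ∧ (D y.1 x.1 ∨ M x.1 y.1 = 2)))
  symm := by
    constructor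
    rintro ⟨a, s⟩ ⟨b, t⟩ ⟨h1, h2⟩
    refine ⟨h1.symm, ?_⟩
    rcases h2 with ⟨hs, ht, hd⟩ | ⟨hs, ht, hd⟩
    · exact Or.inr ⟨ht, hs, by rw [hsymm b a]; exact hd⟩
    · exact Or.inl ⟨ht, hs, by rw [hsymm b a]; exact hd⟩
  loopless := by
    constructor
    rintro ⟨a, s⟩ ⟨h1, _⟩
    exact Γ.loopless.irrefl a h1

namespace SimpleGraph
variable {V : Type} {G : SimpleGraph V}

lemma Walk.IsPath.getVert_inj' {u v : V} {p : G.Walk u v} (hp : p.IsPath) :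
    ∀ i ≤ p.length, ∀ j ≤ p.length, p.getVert i = p.getVert j → i = j := by
  induction p with
  | nil => intro i hi j hj _; simp at hi hj; omega
  | @cons u x v h q ih =>
    rw [Walk.cons_isPath_iff] at hp
    intro i hi j hj hij
    rw [Walk.length_cons] at hi hj
    match i, j with
    | 0, 0 => rfl
    | 0, j+1 =>
      exfalso; apply hp.2
      rw [Walk.getVert_zero, Walk.getVert_cons_succ] at hij
      exact Walk.mem_support_iff_exists_getVert.2 ⟨j, hij.symm, by omega⟩
    | i+1, 0 =>
      exfalso; apply hp.2
      rw [Walk.getVert_zero, Walk.getVert_cons_succ] at hij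
      exact Walk.mem_support_iff_exists_getVert.2 ⟨i, hij, by omega⟩
    | i+1, j+1 =>
      rw [Walk.getVert_cons_succ, Walk.getVert_cons_succ] at hij
      have := ih hp.1 i (by omega) j (by omega) hij
      omega

/-- A walk obtained from a function `ℕ → V` with consecutive adjacency. -/
def walkOfFn (f : ℕ → V) (hf : ∀ i, G.Adj (f i) (f (i + 1))) : (k : ℕ) → G.Walk (f 0) (f k)
  | 0 => Walk.nil
  | k + 1 => (walkOfFn f hf k).concat (hf k)

lemma length_walkOfFn (f : ℕ → V) (hf : ∀ i, G.Adj (f i) (f (i + 1))) (k : ℕ) :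
    (walkOfFn (G := G) f hf k).length = k := by
  induction k with
  | zero => rfl
  | succ k ih => rw [walkOfFn, Walk.length_concat, ih]

lemma getVert_walkOfFn (f : ℕ → V) (hf : ∀ i, G.Adj (f i) (f (i + 1))) (k : ℕ) :
    ∀ i ≤ k, (walkOfFn (G := G) f hf k).getVert i = f i := by
  induction k with
  | zero => intro i hi; interval_cases i; simp [walkOfFn]
  | succ k ih =>
    intro i hi
    rw [walkOfFn, Walk.concat_eq_append, Walk.getVert_append, length_walkOfFn]
    by_cases h : i < k
    · rw [if_pos h]; exact ih i (by omega)
    · rw [if_neg h]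
      rcases (by omega : i = k ∨ i = k + 1) with rfl | rfl
      · simp [Walk.getVert]
      · have : k + 1 - k = 1 := by omega
        rw [this]
        simp [Walk.getVert]

lemma isPath_of_noBacktrack (hG : G.IsAcyclic) {u v : V} (w : G.Walk u v)
    (hw : ∀ i, i + 2 ≤ w.length → w.getVert (i + 2) ≠ w.getVert i) : w.IsPath := by
  classical
  induction w with
  | nil => exact Walk.IsPath.nil
  | @cons u x v h q ih =>
    have hq : q.IsPath := by
      apply ih
      intro i hi
      have := hw (i + 1) (by rw [Walk.length_cons]; omega)
      simpa [Walk.getVert_cons_succ] using this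
    rw [Walk.cons_isPath_iff]
    refine ⟨hq, fun hu => ?_⟩
    set p := q.takeUntil u hu with hpdef
    have hp : p.IsPath := hq.takeUntil hu
    have hlen : p.length ≤ q.length := q.length_takeUntil_le hu
    rcases (Nat.lt_or_ge p.length 2) with hlt | hge
    · rcases (by omega : p.length = 0 ∨ p.length = 1) with h0 | h1
      · have : x = u := by
          have := p.getVert_zero
          have h2 := p.getVert_length
          rw [h0] at h2
          rw [← this, h2]
        exact G.loopless.irrefl u (this ▸ h)
      · have hq1 : q.getVert 1 = u := by
          conv_lhs => rw [← q.take_spec hu]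
          rw [Walk.getVert_append, h1]
          simp
        have := hw 0 (by rw [Walk.length_cons]; omega)
        apply this
        rw [Walk.getVert_zero]
        show (Walk.cons h q).getVert (0 + 2) = u
        rw [show (0 + 2 : ℕ) = 1 + 1 from rfl, Walk.getVert_cons_succ, hq1]
    · have hcyc : (Walk.cons h p).IsCycle := by
        rw [Walk.cons_isCycle_iff]
        refine ⟨hp, fun he => ?_⟩
        have : p.toSubgraph.Adj u x := by
          rw [Subgraph.adj_comm, ← Subgraph.mem_edgeSet, p.mem_edges_toSubgraph]
          rwa [Sym2.eq_swap] at he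
        rw [Walk.toSubgraph_adj_iff] at this
        obtain ⟨i, hi, hilt⟩ := this
        rw [Sym2.eq_iff] at hi
        rcases hi with ⟨hi1, hi2⟩ | ⟨hi1, hi2⟩
        · have : i = p.length := by
            apply hp.getVert_inj' i (by omega) p.length le_rfl
            rw [hi1, Walk.getVert_length]
          omega
        · have hi0 : i = 0 := by
            apply hp.getVert_inj' i (by omega) 0 (by omega)
            rw [hi1, Walk.getVert_zero]
          have : i + 1 = p.length := by
            apply hp.getVert_inj' (i + 1) (by omega) p.length le_rfl
            rw [hi2, Walk.getVert_length]
          omega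
      exact hG _ hcyc

lemma not_isAcyclic_of_cycleMap {n : ℕ} (hn : 0 < n) {c : ZMod n → V}
    (hc : G.IsCycleMap c) : ¬ G.IsAcyclic := by
  intro hG
  have hn3 : 3 ≤ n := by
    by_contra hlt
    have h20 : (2 : ZMod n) = 0 := by
      interval_cases n
      · exact Subsingleton.elim _ _
      · decide
    exact hc.no_backtrack 0 (by rw [zero_add, h20])
  haveI : NeZero n := ⟨by omega⟩
  set f : ℕ → V := fun i => c (i : ZMod n) with hf_def
  have hf : ∀ i, G.Adj (f i) (f (i + 1)) := by
    intro i
    have := hc.adj (i : ZMod n)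
    simpa [hf_def, Nat.cast_add, Nat.cast_one] using this
  set w := walkOfFn (G := G) f hf n with hw_def
  have hNB : ∀ i, i + 2 ≤ w.length → w.getVert (i + 2) ≠ w.getVert i := by
    intro i hi
    rw [hw_def, length_walkOfFn] at hi
    rw [hw_def, getVert_walkOfFn f hf n _ hi, getVert_walkOfFn f hf n i (by omega)]
    have := hc.no_backtrack (i : ZMod n)
    simpa [hf_def, Nat.cast_add, Nat.cast_ofNat] using this
  have hpath := isPath_of_noBacktrack hG w hNB
  have h0n : w.getVert n = w.getVert 0 := by
    rw [hw_def, getVert_walkOfFn f hf n n le_rfl, getVert_walkOfFn f hf n 0 (by omega)]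
    simp [hf_def, ZMod.natCast_self]
  have := hpath.getVert_inj' n (by rw [hw_def, length_walkOfFn]) 0 (by omega) h0n
  omega

lemma exists_cycleMap_of_not_isAcyclic (h : ¬ G.IsAcyclic) :
    ∃ n, 0 < n ∧ ∃ c : ZMod n → V, G.IsCycleMap c := by
  rw [IsAcyclic] at h; push_neg at h
  obtain ⟨v, w, hw⟩ := h
  have h3 := hw.three_le_length
  cases w with
  | nil => exact absurd hw Walk.IsCycle.not_of_nil
  | @cons _ x _ h q =>
    rw [Walk.length_cons] at h3
    rw [Walk.cons_isCycle_iff] at hw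
    set n := q.length + 1 with hn_def
    haveI : NeZero n := ⟨by omega⟩
    refine ⟨n, by omega, fun i => q.getVert i.val, ⟨?_, ?_⟩⟩
    · intro i
      have hval : i.val < n := ZMod.val_lt i
      have hcast : (i + 1 : ZMod n) = ((i.val + 1 : ℕ) : ZMod n) := by
        rw [Nat.cast_add, Nat.cast_one, ZMod.natCast_rightInverse i]
      rw [hcast]
      show G.Adj (q.getVert i.val) (q.getVert (((i.val + 1 : ℕ) : ZMod n)).val)
      rw [ZMod.val_natCast]
      by_cases hi : i.val < q.length
      · rw [Nat.mod_eq_of_lt (by omega)]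
        exact q.adj_getVert_succ hi
      · have hiv : i.val = q.length := by omega
        rw [hiv, show (q.length + 1) % n = 0 by rw [hn_def]; simp]
        rw [Walk.getVert_length, Walk.getVert_zero]
        exact h
    · intro i heq
      have h1 : ((i + 2 : ZMod n).val : ZMod n) = ((i.val : ℕ) : ZMod n) := by
        rw [congrArg (Nat.cast : ℕ → ZMod n)
          (hw.1.getVert_inj' (i + 2).val (by have := ZMod.val_lt (i + 2); omega)
            i.val (by have := ZMod.val_lt i; omega) heq)]
      rw [ZMod.natCast_rightInverse (i + 2), ZMod.natCast_rightInverse i] at h1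
      have h2 : (2 : ZMod n) = 0 := by
        have := add_right_cancel (a := (2 : ZMod n)) (b := i) (c := 0)
        rw [zero_add] at this
        exact this (by rw [add_comm] at h1; rw [h1])
      have : ((2 : ℕ) : ZMod n).val = 0 := by
        rw [show ((2 : ℕ) : ZMod n) = (2 : ZMod n) by push_cast; ring, h2, ZMod.val_zero]
      rw [ZMod.val_natCast, Nat.mod_eq_of_lt (by omega)] at this
      omega

end SimpleGraph

theorem collapsedGraph_acyclic_iff {V : Type} [Fintype V] (Γ : SimpleGraph V)
    (M : V → V → ℕ) (hsymm : ∀ a b, M a b = M b a) (h2 : ∀ a b, Γ.Adj a b → 2 ≤ M a b)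
    (D : V → V → Prop) (hadj : ∀ a b, D a b → Γ.Adj a b)
    (hnotboth : ∀ a b, ¬ (D a b ∧ D b a))
    (hdef : ∀ a b, Γ.Adj a b → ((D a b ∨ D b a) ↔ 3 ≤ M a b)) :
    (collapsedGraph Γ M D hsymm).IsAcyclic ↔
      ((∀ (n : ℕ), 0 < n → ∀ c : ZMod n → V, ¬ MisdirectedEvenCycle Γ D n c) ∧
       (∀ (n : ℕ), 0 < n → ∀ c : ZMod n → V, Γ.IsCycleMap c →
          ¬ ∀ i, M (c i) (c (i + 1)) = 2)) := by
  have hΔadj : ∀ x y : V × Bool, (collapsedGraph Γ M D hsymm).Adj x y ↔ (Γ.Adj x.1 y.1 ∧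
      ((x.2 = true ∧ y.2 = false ∧ (D x.1 y.1 ∨ M x.1 y.1 = 2)) ∨
       (x.2 = false ∧ y.2 = true ∧ (D y.1 x.1 ∨ M x.1 y.1 = 2)))) := fun x y => Iff.rfl
  constructor
  · intro hac
    constructor
    · rintro n hn c ⟨heven, hcyc, s, hs, hD⟩
      refine SimpleGraph.not_isAcyclic_of_cycleMap hn (c := fun i => (c i, s i)) ⟨?_, ?_⟩ hac
      · intro i
        show (collapsedGraph Γ M D hsymm).Adj (c i, s i) (c (i + 1), s (i + 1))
        rw [hΔadj]
        refine ⟨hcyc.adj i, ?_⟩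
        simp only
        have hM : 2 ≤ M (c i) (c (i + 1)) := h2 _ _ (hcyc.adj i)
        by_cases hsi : s i = true
        · refine Or.inl ⟨hsi, by rw [hs i, hsi]; rfl, ?_⟩
          by_cases h3 : 3 ≤ M (c i) (c (i + 1))
          · rcases (hdef _ _ (hcyc.adj i)).2 h3 with hd | hd
            · exact Or.inl hd
            · exact absurd ((hD i).2 hd) (by rw [hsi]; simp)
          · exact Or.inr (by omega)
        · have hsi' : s i = false := by simpa using hsi
          refine Or.inr ⟨hsi', by rw [hs i, hsi']; rfl, ?_⟩
          by_cases h3 : 3 ≤ M (c i) (c (i + 1))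
          · rcases (hdef _ _ (hcyc.adj i)).2 h3 with hd | hd
            · exact absurd ((hD i).1 hd) (by rw [hsi']; simp)
            · exact Or.inl hd
          · exact Or.inr (by omega)
      · intro i heq
        exact hcyc.no_backtrack i (congrArg Prod.fst heq)
    · intro n hn c hcyc hM2
      haveI : NeZero n := ⟨by omega⟩
      haveI : NeZero (2 * n) := ⟨by omega⟩
      set π : ZMod (2 * n) →+* ZMod n := ZMod.castHom (dvd_mul_left n 2) (ZMod n) with hπ
      set σ : ZMod (2 * n) →+* ZMod 2 := ZMod.castHom (dvd_mul_right 2 n) (ZMod 2) with hσ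
      refine SimpleGraph.not_isAcyclic_of_cycleMap (n := 2 * n) (by omega)
        (c := fun j => (c (π j), decide (σ j = 1))) ⟨?_, ?_⟩ hac
      · intro j
        rw [hΔadj]
        have hπ1 : π (j + 1) = π j + 1 := by rw [map_add, map_one]
        have hσ1 : σ (j + 1) = σ j + 1 := by rw [map_add, map_one]
        refine ⟨by simp only; rw [hπ1]; exact hcyc.adj (π j), ?_⟩
        have hM : M (c (π j)) (c (π (j + 1))) = 2 := by rw [hπ1]; exact hM2 (π j)
        by_cases hj : σ j = 1
        · refine Or.inl ⟨by simp [hj], ?_, Or.inr hM⟩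
          simp only [hσ1, hj]
          decide
        · have hj0 : σ j = 0 := by
            have : ∀ x : ZMod 2, x ≠ 1 → x = 0 := by decide
            exact this _ hj
          refine Or.inr ⟨by simp [hj], ?_, Or.inr hM⟩
          simp only [hσ1, hj0]
          decide
      · intro j heq
        have hπ2 : π (j + 2) = π j + 2 := by
          rw [map_add, map_ofNat]
        apply hcyc.no_backtrack (π j)
        have := congrArg Prod.fst heq
        simp only at this
        rw [hπ2] at this
        exact this
  · rintro ⟨hA, _⟩
    by_contra hnac
    obtain ⟨n, hn, c', hc'⟩ := SimpleGraph.exists_cycleMap_of_not_isAcyclic hnac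
    set c : ZMod n → V := fun i => (c' i).1 with hc_def
    set s : ZMod n → Bool := fun i => (c' i).2 with hs_def
    have hadjΓ : ∀ i, Γ.Adj (c i) (c (i + 1)) := fun i => ((hΔadj _ _).1 (hc'.adj i)).1
    have hflip : ∀ i, s (i + 1) = !(s i) := by
      intro i
      rcases ((hΔadj _ _).1 (hc'.adj i)).2 with ⟨ha, hb, _⟩ | ⟨ha, hb, _⟩ <;>
        simp only [hs_def, ha, hb] <;> rfl
    have hss : ∀ i, s (i + 2) = s i := by
      intro i
      have h21 : i + 2 = (i + 1) + 1 := by ring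
      rw [h21, hflip, hflip, Bool.not_not]
    have hnb : ∀ i, c (i + 2) ≠ c i := by
      intro i hceq
      exact hc'.no_backtrack i (Prod.ext hceq (hss i))
    have hpar : ∀ k : ℕ, s (k : ZMod n) = if Even k then s 0 else !(s 0) := by
      intro k
      induction k with
      | zero => simp
      | succ k ih =>
        rw [Nat.cast_add, Nat.cast_one, hflip, ih]
        rcases Nat.even_or_odd k with he | ho
        · rw [if_pos he, if_neg (by simp [Nat.even_add_one, he])]
        · rw [if_neg (Nat.not_even_iff_odd.mpr ho),
            if_pos (by rw [Nat.even_add_one]; exact Nat.not_even_iff_odd.mpr ho), Bool.not_not]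
    have heven : Even n := by
      by_contra hodd
      have := hpar n
      rw [ZMod.natCast_self, if_neg (by simpa using hodd)] at this
      simp at this
    have hcond : ∀ i, (D (c i) (c (i + 1)) → s i = true) ∧
        (D (c (i + 1)) (c i) → s i = false) := by
      intro i
      have hadjd := (hΔadj _ _).1 (hc'.adj i)
      constructor
      · intro hDi
        rcases hadjd.2 with ⟨ha, _, _⟩ | ⟨ha, _, hd⟩
        · exact ha
        · exfalso
          rcases hd with hd | hm
          · exact hnotboth _ _ ⟨hDi, hd⟩
          · have := (hdef _ _ hadjd.1).1 (Or.inl hDi); omega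
      · intro hDi
        rcases hadjd.2 with ⟨ha, _, hd⟩ | ⟨ha, _, _⟩
        · exfalso
          rcases hd with hd | hm
          · exact hnotboth _ _ ⟨hd, hDi⟩
          · have := (hdef _ _ hadjd.1).1 (Or.inr hDi); omega
        · exact ha
    exact hA n hn c ⟨heven, ⟨hadjΓ, hnb⟩, s, hflip, hcond⟩
end
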